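/- Let H₁, H₂, H₃ be complex Hilbert spaces and let A : H₁ → H₂, U : H₃ → H₂, V : H₃ → H₁ be bounded linear operators. Assume the ranges R(A) and R(S_A) are closed, where S_A = I + V*A†U. If R(U) ⊆ R(A), R(V) ⊆ R(A*), R(U*) ⊆ R(S_A), and R(V*) ⊆ R(S_A*), then R(A + UV*) is closed and (A + UV*)† = (I + A†U F_{S_A} U*(A†)*)^{-1} (A† − A†U S_A† V*A†) (I + (A†)* V E_{S_A} V*A†)^{-1}. -/

import Mathlib

open ContinuousLinearMap

/-- `Z` is the Moore–Penrose inverse of the bounded linear operator `A`. -/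
def IsMPOp {E F : Type*}
    [NormedAddCommGroup E] [InnerProductSpace ℂ E] [CompleteSpace E]
    [NormedAddCommGroup F] [InnerProductSpace ℂ F] [CompleteSpace F]
    (A : E →L[ℂ] F) (Z : F →L[ℂ] E) : Prop :=
  A ∘L Z ∘L A = A ∧ Z ∘L A ∘L Z = Z ∧
    adjoint (A ∘L Z) = A ∘L Z ∧ adjoint (Z ∘L A) = Z ∘L A

set_option maxHeartbeats 2000000 in
theorem stmt_17 {H₁ H₂ H₃ : Type*}
    [NormedAddCommGroup H₁] [InnerProductSpace ℂ H₁] [CompleteSpace H₁]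
    [NormedAddCommGroup H₂] [InnerProductSpace ℂ H₂] [CompleteSpace H₂]
    [NormedAddCommGroup H₃] [InnerProductSpace ℂ H₃] [CompleteSpace H₃]
    (A : H₁ →L[ℂ] H₂) (U : H₃ →L[ℂ] H₂) (V : H₃ →L[ℂ] H₁)
    (Adag : H₂ →L[ℂ] H₁) (hAdag : IsMPOp A Adag)
    (S : H₃ →L[ℂ] H₃) (hS : S = 1 + adjoint V ∘L Adag ∘L U)
    (Sdag : H₃ →L[ℂ] H₃) (hSdag : IsMPOp S Sdag)
    (hAclosed : IsClosed (LinearMap.range (A : H₁ →ₗ[ℂ] H₂) : Set H₂))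
    (hSclosed : IsClosed (LinearMap.range (S : H₃ →ₗ[ℂ] H₃) : Set H₃))
    (hU : LinearMap.range (U : H₃ →ₗ[ℂ] H₂) ≤ LinearMap.range (A : H₁ →ₗ[ℂ] H₂))
    (hV : LinearMap.range (V : H₃ →ₗ[ℂ] H₁) ≤ LinearMap.range (adjoint A : H₂ →ₗ[ℂ] H₁))
    (hUs : LinearMap.range (adjoint U : H₂ →ₗ[ℂ] H₃) ≤ LinearMap.range (S : H₃ →ₗ[ℂ] H₃))
    (hVs : LinearMap.range (adjoint V : H₁ →ₗ[ℂ] H₃) ≤ LinearMap.range (adjoint S : H₃ →ₗ[ℂ] H₃)) :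
    IsClosed (LinearMap.range ((A + U ∘L adjoint V : H₁ →L[ℂ] H₂) : H₁ →ₗ[ℂ] H₂) : Set H₂) ∧
      IsMPOp (A + U ∘L adjoint V)
        (Ring.inverse (1 + Adag ∘L U ∘L (1 - Sdag ∘L S) ∘L adjoint U ∘L adjoint Adag) ∘L
          (Adag - Adag ∘L U ∘L Sdag ∘L adjoint V ∘L Adag) ∘L
          Ring.inverse (1 + adjoint Adag ∘L V ∘L (1 - S ∘L Sdag) ∘L adjoint V ∘L Adag)) := by
  obtain ⟨a1, a2, a3, a4⟩ := hAdag
  obtain ⟨s1, s2, s3, s4⟩ := hSdag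
  -- pointwise versions of the Penrose equations
  have pa1 : ∀ x, A (Adag (A x)) = A x := fun x => by
    simpa using DFunLike.congr_fun a1 x
  have pa2 : ∀ x, Adag (A (Adag x)) = Adag x := fun x => by
    simpa using DFunLike.congr_fun a2 x
  have ps1 : ∀ x, S (Sdag (S x)) = S x := fun x => by
    simpa using DFunLike.congr_fun s1 x
  -- range inclusions as operator identities
  have hU' : ∀ x, A (Adag (U x)) = U x := by
    intro x
    obtain ⟨y, hy⟩ := hU ⟨x, rfl⟩
    rw [ContinuousLinearMap.coe_coe, ContinuousLinearMap.coe_coe] at hy; rw [← hy]; exact pa1 y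
  have hopA : (Adag ∘L A) ∘L adjoint A = adjoint A := by
    rw [← a4, ← adjoint_comp, a1]
  have hV' : ∀ x, Adag (A (V x)) = V x := by
    intro x
    obtain ⟨y, hy⟩ := hV ⟨x, rfl⟩
    rw [ContinuousLinearMap.coe_coe, ContinuousLinearMap.coe_coe] at hy; rw [← hy]
    simpa using DFunLike.congr_fun hopA y
  have hV4 : adjoint V ∘L (Adag ∘L A) = adjoint V := by
    have h5 : (Adag ∘L A) ∘L V = V := by
      ext x; simpa using hV' x
    have h6 := congrArg adjoint h5
    rwa [adjoint_comp, a4] at h6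
  have hV'' : ∀ x, adjoint V (Adag (A x)) = adjoint V x := fun x => by
    simpa using DFunLike.congr_fun hV4 x
  have hopS : (Sdag ∘L S) ∘L adjoint S = adjoint S := by
    rw [← s4, ← adjoint_comp, s1]
  have hUs' : ∀ x, S (Sdag (adjoint U x)) = adjoint U x := by
    intro x
    obtain ⟨y, hy⟩ := hUs ⟨x, rfl⟩
    rw [ContinuousLinearMap.coe_coe, ContinuousLinearMap.coe_coe] at hy; rw [← hy]; exact ps1 y
  have hOpU : (S ∘L Sdag) ∘L adjoint U = adjoint U := by
    ext x; simpa using hUs' x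
  have hU2 : U ∘L (S ∘L Sdag) = U := by
    have h6 := congrArg adjoint hOpU
    rwa [adjoint_comp, adjoint_adjoint, s3] at h6
  have hVs' : ∀ x, Sdag (S (adjoint V x)) = adjoint V x := by
    intro x
    obtain ⟨y, hy⟩ := hVs ⟨x, rfl⟩
    rw [ContinuousLinearMap.coe_coe, ContinuousLinearMap.coe_coe] at hy; rw [← hy]
    simpa using DFunLike.congr_fun hopS y
  have hOpV : (Sdag ∘L S) ∘L adjoint V = adjoint V := by
    ext x; simpa using hVs' x
  have hV2 : V ∘L (Sdag ∘L S) = V := by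
    have h6 := congrArg adjoint hOpV
    rwa [adjoint_comp, adjoint_adjoint, s4] at h6
  -- pointwise formula for S and S*
  have hSp : ∀ y, S y = y + adjoint V (Adag (U y)) := fun y => by
    rw [hS]; simp only [add_apply, coe_comp', Function.comp_apply, ContinuousLinearMap.one_apply]
  have hSadj : adjoint S = 1 + (adjoint U ∘L adjoint Adag) ∘L V := by
    rw [hS, map_add, adjoint_comp, adjoint_comp, adjoint_adjoint]
    rw [one_def, adjoint_id]
  have hSadjp : ∀ y, adjoint S y = y + adjoint U (adjoint Adag (V y)) := fun y => by
    rw [hSadj]; simp only [add_apply, coe_comp', Function.comp_apply, ContinuousLinearMap.one_apply]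
  -- S is injective
  have hSinj : ∀ x, S x = 0 → x = 0 := by
    intro x hx
    have hVx : V x = 0 := by
      have h := DFunLike.congr_fun hV2 x
      simp only [comp_apply, coe_comp', Function.comp_apply] at h
      rw [hx, map_zero, map_zero] at h
      exact h.symm
    have hxx : x = -(adjoint V (Adag (U x))) := by
      have h := hSp x
      rw [hx] at h
      exact eq_neg_of_add_eq_zero_left h.symm
    have hz : (inner ℂ x x : ℂ) = 0 := by
      nth_rewrite 1 [hxx]
      rw [inner_neg_left, adjoint_inner_left, hVx, inner_zero_right, neg_zero]
    exact inner_self_eq_zero.mp hz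
  -- adjoint S is injective
  have hSadjinj : ∀ x, adjoint S x = 0 → x = 0 := by
    intro x hx
    have h2 : S (Sdag x) = 0 := by
      have h3 := DFunLike.congr_fun (s3.symm.trans (adjoint_comp S Sdag)) x
      simp only [comp_apply, coe_comp', Function.comp_apply] at h3
      rw [hx, map_zero] at h3
      exact h3
    have hUx : U x = 0 := by
      have h := DFunLike.congr_fun hU2 x
      simp only [comp_apply, coe_comp', Function.comp_apply] at h
      rw [h2, map_zero] at h
      exact h.symm
    have hxx : x = -(adjoint U (adjoint Adag (V x))) := by
      have h := hSadjp x
      rw [hx] at h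
      exact eq_neg_of_add_eq_zero_left h.symm
    have hz : (inner ℂ x x : ℂ) = 0 := by
      nth_rewrite 1 [hxx]
      rw [inner_neg_left, adjoint_inner_left, hUx, inner_zero_right, neg_zero]
    exact inner_self_eq_zero.mp hz
  -- hence S is invertible with inverse Sdag
  have hSdS : Sdag ∘L S = 1 := by
    ext x
    have h0 : S (Sdag (S x) - x) = 0 := by
      rw [map_sub, ps1, sub_self]
    have h1 := hSinj _ h0
    have h2 : Sdag (S x) = x := by rwa [sub_eq_zero] at h1
    simpa using h2
  have hSSd : S ∘L Sdag = 1 := by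
    have hop2 : adjoint S ∘L (S ∘L Sdag) = adjoint S := by
      rw [← s3, ← adjoint_comp, comp_assoc, s1]
    ext x
    have h5 := DFunLike.congr_fun hop2 x
    simp only [comp_apply, coe_comp', Function.comp_apply] at h5
    have h0 : adjoint S (S (Sdag x) - x) = 0 := by
      rw [map_sub, h5, sub_self]
    have h1 := hSadjinj _ h0
    have h2 : S (Sdag x) = x := by rwa [sub_eq_zero] at h1
    simpa using h2
  have hSSdp : ∀ y, S (Sdag y) = y := fun y => by
    simpa using DFunLike.congr_fun hSSd y
  have hSdSp : ∀ y, Sdag (S y) = y := fun y => by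
    simpa using DFunLike.congr_fun hSdS y
  -- the correction factors are trivial
  simp only [hSdS, hSSd, sub_self, comp_zero, zero_comp, add_zero, Ring.inverse_one]
  simp only [one_def, id_comp, comp_id]
  -- key pointwise identities for B = A + U V* and G = A† - A† U S† V* A†
  have key1 : ∀ x, (A + U ∘L adjoint V)
      ((Adag - Adag ∘L U ∘L Sdag ∘L adjoint V ∘L Adag) x) = A (Adag x) := by
    intro x
    set w := Adag x with hw
    set s := Sdag (adjoint V w) with hs
    have h2 : adjoint V (Adag (U s)) = S s - s := by
      have h := (hSp s).symm
      rw [add_comm] at h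
      exact eq_sub_of_add_eq h
    have h3 : S s = adjoint V w := by rw [hs]; exact hSSdp _
    have hGx : (Adag - Adag ∘L U ∘L Sdag ∘L adjoint V ∘L Adag) x = w - Adag (U s) := by
      simp only [sub_apply, comp_apply, coe_comp', Function.comp_apply, ← hw, ← hs]
    rw [hGx]
    simp only [add_apply, comp_apply, coe_comp', Function.comp_apply]
    rw [map_sub A, hU' s, map_sub (adjoint V), h2, h3]
    have h9 : adjoint V w - (adjoint V w - s) = s := by abel
    rw [h9]
    abel
  have key2 : ∀ x, (Adag - Adag ∘L U ∘L Sdag ∘L adjoint V ∘L Adag)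
      ((A + U ∘L adjoint V) x) = Adag (A x) := by
    intro x
    have hBx : (A + U ∘L adjoint V) x = A x + U (adjoint V x) := by
      simp only [add_apply, comp_apply, coe_comp', Function.comp_apply]
    rw [hBx]
    simp only [sub_apply, comp_apply, coe_comp', Function.comp_apply]
    rw [map_add Adag (A x), map_add (adjoint V), hV'' x]
    have h7 : adjoint V (Adag (U (adjoint V x))) = S (adjoint V x) - adjoint V x := by
      have h := (hSp (adjoint V x)).symm
      rw [add_comm] at h
      exact eq_sub_of_add_eq h
    rw [h7]
    have h8 : adjoint V x + (S (adjoint V x) - adjoint V x) = S (adjoint V x) := by abel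
    rw [h8, hSdSp]
    abel
  have hP : ∀ y, A (Adag ((A + U ∘L adjoint V) y)) = (A + U ∘L adjoint V) y := by
    intro y
    have hBy : (A + U ∘L adjoint V) y = A y + U (adjoint V y) := by
      simp only [add_apply, comp_apply, coe_comp', Function.comp_apply]
    rw [hBy, map_add Adag, map_add A, pa1, hU']
  have hBG : (A + U ∘L adjoint V) ∘L (Adag - Adag ∘L U ∘L Sdag ∘L adjoint V ∘L Adag)
      = A ∘L Adag := by
    ext x; simpa only [comp_apply, coe_comp', Function.comp_apply] using key1 x
  have hGB : (Adag - Adag ∘L U ∘L Sdag ∘L adjoint V ∘L Adag) ∘L (A + U ∘L adjoint V)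
      = Adag ∘L A := by
    ext x; simpa only [comp_apply, coe_comp', Function.comp_apply] using key2 x
  constructor
  · -- closedness of the range
    have hset : (LinearMap.range ((A + U ∘L adjoint V : H₁ →L[ℂ] H₂) : H₁ →ₗ[ℂ] H₂) : Set H₂)
        = (LinearMap.ker ((1 - A ∘L Adag : H₂ →L[ℂ] H₂) : H₂ →ₗ[ℂ] H₂) : Set H₂) := by
      ext z
      simp only [SetLike.mem_coe, LinearMap.mem_range, LinearMap.mem_ker]
      constructor
      · rintro ⟨y, rfl⟩
        have := hP y
        simp only [ContinuousLinearMap.coe_coe, sub_apply, comp_apply, coe_comp', Function.comp_apply, ContinuousLinearMap.one_apply]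
        rw [this, sub_self]
      · intro hz
        have hz' : A (Adag z) = z := by
          have : z - A (Adag z) = 0 := by
            simpa [sub_apply, one_apply, comp_apply] using hz
          rw [sub_eq_zero] at this
          exact this.symm
        exact ⟨(Adag - Adag ∘L U ∘L Sdag ∘L adjoint V ∘L Adag) z, by rw [ContinuousLinearMap.coe_coe, key1 z, hz']⟩
    rw [hset]
    exact isClosed_ker _
  · refine ⟨?_, ?_, ?_, ?_⟩
    · rw [hGB]
      ext x
      simp only [comp_apply, coe_comp', Function.comp_apply, add_apply]
      rw [pa1, hV'']
    · rw [hBG]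
      ext x
      simp only [comp_apply, coe_comp', Function.comp_apply, sub_apply]
      rw [pa2]
    · rw [hBG]; exact a3
    · rw [hGB]; exact a4
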